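/- Suppose U and V are open subsets of the Λ-duplicate D such that the restrictions of the natural projection π : D → Λ to U and to V are injective, and π(U) = π(V) = (r,t] for some r ∈ Λ ∪ {0}, t ∈ Λ. Then there exist basic open sets W_1, …, W_k and W′_1, …, W′_k such that U = W_1 ∪ ⋯ ∪ W_k and V = W′_1 ∪ ⋯ ∪ W′_k, for every i ≤ k either W_i = W′_i or W_i ∩ W′_i = ∅, and for i ≠ j both W_i ∩ W_j and W′_i ∩ W′_j are empty. -/

import Mathlib

/-- An element of Kurepa's tree `Λ`: an injective function `t : α → ω` with countable
ordinal domain `α` and coinfinite range.  The function is represented as a total function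
on ordinals which takes the junk value `0` outside of the domain. -/
structure Lambda : Type 1 where
  toFun : Ordinal.{0} → ℕ
  dom : Ordinal.{0}
  countable : dom.card ≤ Cardinal.aleph0
  inj : ∀ β γ, β < dom → γ < dom → toFun β = toFun γ → β = γ
  coinfinite : {n : ℕ | ∀ β, β < dom → toFun β ≠ n}.Infinite
  junk : ∀ β, ¬ β < dom → toFun β = 0

/-- The tree order on `Λ`: `s ≼ t` iff `t` extends `s`. -/
def Lambda.le (s t : Lambda) : Prop :=
  s.dom ≤ t.dom ∧ ∀ β, β < s.dom → s.toFun β = t.toFun β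

/-- The strict tree order on `Λ`. -/
def Lambda.lt (s t : Lambda) : Prop := Lambda.le s t ∧ s ≠ t

/-- `r ≺ s` for `r ∈ Λ ∪ {0}` (`none` plays the role of the extra least element `0`). -/
def precLt : Option Lambda → Lambda → Prop
  | none, _ => True
  | some r, s => Lambda.lt r s

/-- The interval `(r, t] = {s ∈ Λ : r ≺ s ≼ t}`, with `r ∈ Λ ∪ {0}`. -/
def lamIoc (r : Option Lambda) (t : Lambda) : Set Lambda :=
  {s | precLt r s ∧ Lambda.le s t}

/-- The position of the minimum of `t` on the ordinal interval `[δ, β)`. -/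
noncomputable def minPos (t : Ordinal.{0} → ℕ) (δ β : Ordinal.{0}) : Ordinal.{0} :=
  sInf {ξ | δ ≤ ξ ∧ ξ < β ∧ ∀ η, δ ≤ η → η < β → t ξ ≤ t η}

lemma minPos_lt (t : Ordinal.{0} → ℕ) {δ β : Ordinal.{0}} (h : δ < β) : minPos t δ β < β := by
  have hne : {ξ : Ordinal.{0} | δ ≤ ξ ∧ ξ < β ∧ ∀ η, δ ≤ η → η < β → t ξ ≤ t η}.Nonempty := by
    have h1 : {n : ℕ | ∃ ξ : Ordinal.{0}, δ ≤ ξ ∧ ξ < β ∧ t ξ = n}.Nonempty :=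
      ⟨t δ, δ, le_refl _, h, rfl⟩
    obtain ⟨ξ, hξ1, hξ2, hξ3⟩ := Nat.sInf_mem h1
    refine ⟨ξ, hξ1, hξ2, fun η h1' h2' => ?_⟩
    rw [hξ3]
    exact Nat.sInf_le ⟨η, h1', h2', rfl⟩
  obtain ⟨ξ, hξ⟩ := hne
  calc minPos t δ β ≤ ξ := csInf_le (OrderBot.bddBelow _) hξ
    _ < β := hξ.2.1

/-- The sequence `τ` computed from the starting ordinal `β₀` downwards: `τ` is obtained by
repeatedly passing from `β` to the position of the minimum of `t` on `[δ, β)`, stopping upon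
reaching `δ`.  The resulting finite sequence `(β_k, …, β_1)` is recorded as a list in the
order `[β_k, …, β_1]` (so concatenation of the lists corresponds to `⌢`). -/
noncomputable def tauFrom (δ : Ordinal.{0}) (t : Ordinal.{0} → ℕ) : Ordinal.{0} → List Ordinal.{0} :=
  WellFounded.fix wellFounded_lt
    (fun β IH => if h : δ < β then IH (minPos t δ β) (minPos_lt t h) ++ [minPos t δ β] else [])

/-- The finite sequence `τ(s,t)` of ordinals, for `s ≼ t` in `Λ`. -/
noncomputable def tau (s t : Lambda) : List Ordinal.{0} :=
  tauFrom s.dom t.toFun t.dom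

/-- `ℓ(s,t)`, the length of `τ(s,t)`. -/
noncomputable def ell (s t : Lambda) : ℕ := (tau s t).length

/-- The underlying set of the `Λ`-duplicate: `D = Λ × {1, -1}`. -/
abbrev Dup : Type 1 := Lambda × ℤˣ

/-- The basic open sets `W(r,t,i)` of the `Λ`-duplicate. -/
noncomputable def Wset (r : Option Lambda) (t : Lambda) (i : ℤˣ) : Set Dup :=
  {q | q.1 ∈ lamIoc r t ∧ q.2 = (-1) ^ ell q.1 t * i}

/-- The collection of all basic open sets `W(r,t,i)` with `r ≺ t`. -/
noncomputable def WBasis : Set (Set Dup) :=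
  {S | ∃ (r : Option Lambda) (t : Lambda) (i : ℤˣ), precLt r t ∧ S = Wset r t i}

/-- The topology of the `Λ`-duplicate, generated by the basic sets `W(r,t,i)`. -/
noncomputable instance : TopologicalSpace Dup := TopologicalSpace.generateFrom WBasis



-- ============ auxiliary lemmas ============

namespace LambdaAux

lemma Lambda.ext' {s t : Lambda} (hd : s.dom = t.dom)
    (hf : ∀ β, β < s.dom → s.toFun β = t.toFun β) : s = t := by
  cases s with | mk f d c i co j =>
  cases t with | mk f' d' c' i' co' j' =>
  dsimp at hd hf
  subst hd
  have hff : f = f' := by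
    funext β
    by_cases h : β < d
    · exact hf β h
    · rw [j β h, j' β h]
  subst hff
  rfl

lemma Lambda.le_refl (s : Lambda) : s.le s := ⟨le_rfl, fun _ _ => rfl⟩

lemma Lambda.le_trans {a b c : Lambda} (h1 : a.le b) (h2 : b.le c) : a.le c :=
  ⟨h1.1.trans h2.1, fun β hβ => (h1.2 β hβ).trans (h2.2 β (hβ.trans_le h1.1))⟩

lemma Lambda.lt_dom {s t : Lambda} (h : s.lt t) : s.dom < t.dom :=
  lt_of_le_of_ne h.1.1 (fun hd => h.2 (Lambda.ext' hd h.1.2))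

lemma le_of_both_le {x y b : Lambda} (hx : x.le b) (hy : y.le b) (hd : x.dom ≤ y.dom) :
    x.le y :=
  ⟨hd, fun β hβ => (hx.2 β hβ).trans (hy.2 β (lt_of_lt_of_le hβ hd)).symm⟩

lemma lt_of_both_le {x y b : Lambda} (hx : x.le b) (hy : y.le b) (hd : x.dom < y.dom) :
    x.lt y :=
  ⟨le_of_both_le hx hy hd.le, fun he => lt_irrefl _ (he ▸ hd)⟩

lemma Lambda.lt_trans {a b c : Lambda} (h1 : a.lt b) (h2 : b.lt c) : a.lt c := by
  have hd : a.dom < c.dom := (Lambda.lt_dom h1).trans (Lambda.lt_dom h2)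
  refine ⟨Lambda.le_trans h1.1 h2.1, fun he => ?_⟩
  rw [he] at hd
  exact lt_irrefl _ hd

noncomputable def res (t : Lambda) (β : Ordinal.{0}) (hβ : β ≤ t.dom) : Lambda where
  toFun γ := if γ < β then t.toFun γ else 0
  dom := β
  countable := le_trans (Ordinal.card_le_card hβ) t.countable
  inj := by
    intro a b ha hb h
    have h' : t.toFun a = t.toFun b := by simpa [ha, hb] using h
    exact t.inj a b (lt_of_lt_of_le ha hβ) (lt_of_lt_of_le hb hβ) h'
  coinfinite := by
    apply t.coinfinite.mono
    intro n hn γ hγ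
    simp only [if_pos hγ]
    exact hn γ (lt_of_lt_of_le hγ hβ)
  junk := fun γ h => if_neg h

@[simp] lemma res_dom (t : Lambda) (β : Ordinal.{0}) (hβ : β ≤ t.dom) :
    (res t β hβ).dom = β := rfl

lemma res_le (t : Lambda) (β : Ordinal.{0}) (hβ : β ≤ t.dom) : (res t β hβ).le t :=
  ⟨hβ, fun γ hγ => if_pos hγ⟩

lemma res_le_of {t x : Lambda} {β : Ordinal.{0}} (hβ : β ≤ t.dom) (hx : x.le t)
    (hβx : β ≤ x.dom) : (res t β hβ).le x := by
  refine ⟨hβx, fun γ hγ => ?_⟩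
  show (if γ < β then t.toFun γ else 0) = x.toFun γ
  rw [if_pos (show γ < β from hγ)]
  exact (hx.2 γ (lt_of_lt_of_le hγ hβx)).symm

-- tau machinery

lemma tauFrom_def (δ : Ordinal.{0}) (f : Ordinal.{0} → ℕ) (β : Ordinal.{0}) :
    tauFrom δ f β =
      if h : δ < β then tauFrom δ f (minPos f δ β) ++ [minPos f δ β] else [] := by
  unfold tauFrom
  exact WellFounded.fix_eq _ _ _

lemma minPos_mem (f : Ordinal.{0} → ℕ) {δ β : Ordinal.{0}} (h : δ < β) :
    δ ≤ minPos f δ β ∧ minPos f δ β < β ∧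
      ∀ η, δ ≤ η → η < β → f (minPos f δ β) ≤ f η := by
  have hne : {ξ : Ordinal.{0} | δ ≤ ξ ∧ ξ < β ∧ ∀ η, δ ≤ η → η < β → f ξ ≤ f η}.Nonempty := by
    have h1 : {n : ℕ | ∃ ξ : Ordinal.{0}, δ ≤ ξ ∧ ξ < β ∧ f ξ = n}.Nonempty :=
      ⟨f δ, δ, le_refl _, h, rfl⟩
    obtain ⟨ξ, hξ1, hξ2, hξ3⟩ := Nat.sInf_mem h1
    refine ⟨ξ, hξ1, hξ2, fun η h1' h2' => ?_⟩
    rw [hξ3]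
    exact Nat.sInf_le ⟨η, h1', h2', rfl⟩
  exact csInf_mem hne

lemma tauFrom_congr (δ : Ordinal.{0}) {f g : Ordinal.{0} → ℕ} :
    ∀ β, (∀ γ, δ ≤ γ → γ < β → f γ = g γ) → tauFrom δ f β = tauFrom δ g β := by
  intro β
  induction β using Ordinal.induction with
  | h β IH =>
  intro hfg
  rw [tauFrom_def δ f β, tauFrom_def δ g β]
  by_cases h : δ < β
  · rw [dif_pos h, dif_pos h]
    have hmp : minPos f δ β = minPos g δ β := by
      unfold minPos
      congr 1
      ext ξ
      simp only [Set.mem_setOf_eq]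
      constructor
      · rintro ⟨h1, h2, h3⟩
        exact ⟨h1, h2, fun η hη1 hη2 => by
          rw [← hfg ξ h1 h2, ← hfg η hη1 hη2]; exact h3 η hη1 hη2⟩
      · rintro ⟨h1, h2, h3⟩
        exact ⟨h1, h2, fun η hη1 hη2 => by
          rw [hfg ξ h1 h2, hfg η hη1 hη2]; exact h3 η hη1 hη2⟩
    rw [hmp, IH (minPos g δ β) (minPos_lt g h)
      (fun γ h1 h2 => hfg γ h1 (h2.trans (minPos_lt g h)))]
  · rw [dif_neg h, dif_neg h]

lemma tauFrom_nil (δ : Ordinal.{0}) (f : Ordinal.{0} → ℕ) {β : Ordinal.{0}} (h : ¬ δ < β) :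
    tauFrom δ f β = [] := by rw [tauFrom_def, dif_neg h]


-- nearTop: the tau sequence from β' splits off a fixed tail H for all floors γ near β
lemma nearTop (f : Ordinal.{0} → ℕ) (D : Ordinal.{0})
    (hinj : ∀ a b, a < D → b < D → f a = f b → a = b) :
    ∀ β', β' ≤ D → ∀ β, β ≤ β' →
      ∃ (M : Ordinal.{0}) (H : List Ordinal.{0}),
        (M = 0 ∨ ∃ ν, M = ν + 1) ∧ M ≤ β ∧
        ∀ γ, M ≤ γ → γ ≤ β → tauFrom γ f β' = tauFrom γ f β ++ H := by
  intro β'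
  induction β' using Ordinal.induction with
  | h β' IH =>
  intro hD β hβ
  rcases eq_or_lt_of_le hβ with rfl | hlt
  · exact ⟨0, [], Or.inl rfl, zero_le, fun γ _ _ => (List.append_nil _).symm⟩
  obtain ⟨hβm, hmβ', hmin⟩ := minPos_mem f hlt
  set m := minPos f β β' with hm
  -- threshold M₀ below which small values appear
  have hM₀ex : ∃ M₀ : Ordinal.{0}, (M₀ = 0 ∨ ∃ ν, M₀ = ν + 1) ∧ M₀ ≤ β ∧
      ∀ η, M₀ ≤ η → η < β → f m < f η := by
    by_cases hBne : {η : Ordinal.{0} | η < β ∧ f η ≤ f m}.Nonempty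
    · have hBfin : {η : Ordinal.{0} | η < β ∧ f η ≤ f m}.Finite := by
        apply Set.Finite.of_finite_image (f := f)
        · exact (Set.finite_Iic (f m)).subset (by rintro n ⟨η, hη, rfl⟩; exact hη.2)
        · intro a ha b hb hab
          exact hinj a b (lt_of_lt_of_le (lt_trans ha.1 hlt) hD)
            (lt_of_lt_of_le (lt_trans hb.1 hlt) hD) hab
      obtain ⟨μ, hμmem, hμmax⟩ : ∃ μ ∈ {η : Ordinal.{0} | η < β ∧ f η ≤ f m},
          ∀ a' ∈ {η : Ordinal.{0} | η < β ∧ f η ≤ f m}, id μ ≤ id a' → id μ = id a' := by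
        obtain ⟨μ, hμ⟩ := hBfin.exists_maximal hBne
        exact ⟨μ, hμ.1, fun a' ha' h => le_antisymm h (hμ.2 ha' h)⟩
      refine ⟨μ + 1, Or.inr ⟨μ, rfl⟩, ?_, ?_⟩
      · rw [Ordinal.add_one_eq_succ]; exact Order.succ_le_of_lt hμmem.1
      · intro η h1 h2
        by_contra hc
        push_neg at hc
        have hηB : η ∈ {η : Ordinal.{0} | η < β ∧ f η ≤ f m} := ⟨h2, hc⟩
        have hle : η ≤ μ := by
          by_contra hc2
          push_neg at hc2
          exact absurd (hμmax η hηB hc2.le) (ne_of_lt hc2)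
        have : μ + 1 ≤ μ := le_trans h1 hle
        rw [Ordinal.add_one_eq_succ] at this
        exact absurd this (not_le.2 (Order.lt_succ μ))
    · exact ⟨0, Or.inl rfl, zero_le, fun η _ h2 => by
        by_contra hc; push_neg at hc; exact hBne ⟨η, h2, hc⟩⟩
  obtain ⟨M₀, hM₀01, hM₀β, hM₀⟩ := hM₀ex
  -- near the top the first min position is m
  have hminPos : ∀ γ, M₀ ≤ γ → γ ≤ β → minPos f γ β' = m := by
    intro γ h1 h2
    have hsets : {ξ : Ordinal.{0} | γ ≤ ξ ∧ ξ < β' ∧ ∀ η, γ ≤ η → η < β' → f ξ ≤ f η}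
        = {ξ : Ordinal.{0} | β ≤ ξ ∧ ξ < β' ∧ ∀ η, β ≤ η → η < β' → f ξ ≤ f η} := by
      ext ξ
      simp only [Set.mem_setOf_eq]
      constructor
      · rintro ⟨hξ1, hξ2, hξ3⟩
        have hfv : f ξ ≤ f m := hξ3 m (le_trans h2 hβm) hmβ'
        have hβξ : β ≤ ξ := by
          by_contra hc
          push_neg at hc
          exact absurd hfv (not_le.2 (hM₀ ξ (le_trans h1 hξ1) hc))
        exact ⟨hβξ, hξ2, fun η hη1 hη2 => hξ3 η (le_trans h2 hη1) hη2⟩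
      · rintro ⟨hξ1, hξ2, hξ3⟩
        refine ⟨le_trans h2 hξ1, hξ2, fun η hη1 hη2 => ?_⟩
        rcases lt_or_ge η β with hηβ | hηβ
        · exact le_trans (hξ3 m hβm hmβ') (le_of_lt (hM₀ η (le_trans h1 hη1) hηβ))
        · exact hξ3 η hηβ hη2
    rw [hm]
    unfold minPos
    rw [hsets]
  obtain ⟨M₁, H₁, hM₁01, hM₁β, hH₁⟩ := IH m hmβ' (le_of_lt (lt_of_lt_of_le hmβ' hD)) β hβm
  have hmax01 : (max M₀ M₁ = 0 ∨ ∃ ν, max M₀ M₁ = ν + 1) := by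
    rcases le_total M₀ M₁ with h | h
    · rw [max_eq_right h]; exact hM₁01
    · rw [max_eq_left h]; exact hM₀01
  refine ⟨max M₀ M₁, H₁ ++ [m], hmax01, max_le hM₀β hM₁β, ?_⟩
  intro γ hγ1 hγ2
  have hγβ' : γ < β' := lt_of_le_of_lt hγ2 hlt
  rw [tauFrom_def γ f β', dif_pos hγβ', hminPos γ (le_trans (le_max_left _ _) hγ1) hγ2,
      hH₁ γ (le_trans (le_max_right _ _) hγ1) hγ2, List.append_assoc]



-- combining optional thresholds
noncomputable def omax : Option Ordinal.{0} → Option Ordinal.{0} → Option Ordinal.{0}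
  | none, b => b
  | some a, none => some a
  | some a, some b => some (max a b)

lemma omax_forall_lt {a b : Option Ordinal.{0}} {d : Ordinal.{0}} :
    (∀ ϑ ∈ omax a b, ϑ < d) ↔ (∀ ϑ ∈ a, ϑ < d) ∧ (∀ ϑ ∈ b, ϑ < d) := by
  cases a <;> cases b <;> simp [omax, max_lt_iff]

lemma tau_self (s : Lambda) : tau s s = [] := by
  unfold tau
  exact tauFrom_nil _ _ (lt_irrefl _)

-- shrinking a basic neighborhood of (s, j) to one with top s
lemma shrink {s t' : Lambda} {j i : ℤˣ} {r' : Option Lambda}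
    (hmem : (s, j) ∈ Wset r' t' i) :
    ∃ θ : Option Ordinal.{0}, (∀ ϑ ∈ θ, ϑ < s.dom) ∧
      ∀ x, Lambda.le x s → (∀ ϑ ∈ θ, ϑ < x.dom) →
        (x, (-1) ^ ell x s * j) ∈ Wset r' t' i := by
  obtain ⟨⟨hprec, hst⟩, hj⟩ := hmem
  have hj' : j = (-1) ^ ell s t' * i := hj
  obtain ⟨M, H, hM01, hMle, hH⟩ := nearTop t'.toFun t'.dom t'.inj t'.dom le_rfl s.dom hst.1
  have htauxs : ∀ x : Lambda, Lambda.le x s →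
      tauFrom x.dom t'.toFun s.dom = tau x s := by
    intro x hx
    unfold tau
    exact tauFrom_congr x.dom s.dom (fun γ _ hγ => (hst.2 γ hγ).symm)
  have htst : tau s t' = H := by
    show tauFrom s.dom t'.toFun t'.dom = H
    rw [hH s.dom hMle le_rfl, tauFrom_nil _ _ (lt_irrefl _)]
    simp
  have hell : ∀ x, Lambda.le x s → M ≤ x.dom → ell x t' = ell x s + ell s t' := by
    intro x hx hMx
    have h1 : tau x t' = tau x s ++ H := by
      show tauFrom x.dom t'.toFun t'.dom = tau x s ++ H
      rw [hH x.dom hMx hx.1, htauxs x hx]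
    show (tau x t').length = (tau x s).length + (tau s t').length
    rw [h1, htst, List.length_append]
  -- threshold from r'
  have hθr : ∃ θr : Option Ordinal.{0}, (∀ ϑ ∈ θr, ϑ < s.dom) ∧
      ∀ x, Lambda.le x s → (∀ ϑ ∈ θr, ϑ < x.dom) → precLt r' x := by
    cases r' with
    | none => exact ⟨none, by simp, fun x _ _ => trivial⟩
    | some r₀ =>
      have hr₀s : r₀.lt s := hprec
      refine ⟨some r₀.dom, ?_, ?_⟩
      · intro ϑ hϑ
        rw [Option.mem_some_iff] at hϑ
        rw [← hϑ]
        exact Lambda.lt_dom hr₀s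
      · intro x hx hq
        have hd : r₀.dom < x.dom := hq r₀.dom rfl
        exact lt_of_both_le hr₀s.1 hx hd
  obtain ⟨θr, hθr1, hθr2⟩ := hθr
  -- threshold from M
  have hθM : ∃ θM : Option Ordinal.{0}, (∀ ϑ ∈ θM, ϑ < s.dom) ∧
      ∀ x : Lambda, (∀ ϑ ∈ θM, ϑ < x.dom) → M ≤ x.dom := by
    rcases hM01 with rfl | ⟨ν, rfl⟩
    · exact ⟨none, by simp, fun x _ => zero_le⟩
    · refine ⟨some ν, ?_, ?_⟩
      · intro ϑ hϑ
        rw [Option.mem_some_iff] at hϑ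
        rw [← hϑ]
        calc ν < ν + 1 := by rw [Ordinal.add_one_eq_succ]; exact Order.lt_succ ν
          _ ≤ s.dom := hMle
      · intro x hq
        have := hq ν rfl
        rw [Ordinal.add_one_eq_succ]
        exact Order.succ_le_of_lt this
  obtain ⟨θM, hθM1, hθM2⟩ := hθM
  refine ⟨omax θr θM, omax_forall_lt.2 ⟨hθr1, hθM1⟩, ?_⟩
  intro x hx hq
  obtain ⟨hq1, hq2⟩ := omax_forall_lt.1 hq
  have hMx : M ≤ x.dom := hθM2 x hq2
  constructor
  · exact ⟨hθr2 x hx hq1, Lambda.le_trans hx hst⟩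
  · show (-1 : ℤˣ) ^ ell x s * j = (-1) ^ ell x t' * i
    rw [hj', hell x hx hMx, pow_add, mul_assoc]

-- every point of an open set has a basic neighborhood with top that point
lemma open_nbhd {U : Set Dup} (hU : IsOpen U) :
    ∀ p ∈ U, ∃ θ : Option Ordinal.{0}, (∀ ϑ ∈ θ, ϑ < p.1.dom) ∧
      ∀ x, Lambda.le x p.1 → (∀ ϑ ∈ θ, ϑ < x.dom) →
        (x, (-1) ^ ell x p.1 * p.2) ∈ U := by
  have hg : TopologicalSpace.GenerateOpen WBasis U := hU
  clear hU
  induction hg with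
  | basic S hS =>
    obtain ⟨r', t', i, hprec, rfl⟩ := hS
    rintro ⟨s, j⟩ hp
    exact shrink hp
  | univ =>
    intro p _
    exact ⟨none, by simp, fun x _ _ => trivial⟩
  | inter U₁ U₂ h₁ h₂ IH₁ IH₂ =>
    intro p hp
    obtain ⟨θ₁, hθ₁1, hθ₁2⟩ := IH₁ p hp.1
    obtain ⟨θ₂, hθ₂1, hθ₂2⟩ := IH₂ p hp.2
    refine ⟨omax θ₁ θ₂, omax_forall_lt.2 ⟨hθ₁1, hθ₂1⟩, ?_⟩
    intro x hx hq
    obtain ⟨hq1, hq2⟩ := omax_forall_lt.1 hq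
    exact ⟨hθ₁2 x hx hq1, hθ₂2 x hx hq2⟩
  | sUnion S hS IH =>
    intro p hp
    obtain ⟨W₀, hW₀S, hpW₀⟩ := hp
    obtain ⟨θ, hθ1, hθ2⟩ := IH W₀ hW₀S p hpW₀
    exact ⟨θ, hθ1, fun x hx hq => Set.mem_sUnion.2 ⟨W₀, hW₀S, hθ2 x hx hq⟩⟩



-- simultaneous decomposition of U and V over (r, b], by recursion on b.dom
lemma dec (U V : Set Dup) (r : Option Lambda) (t : Lambda)
    (hUo : IsOpen U) (hVo : IsOpen V)
    (hUim : Prod.fst '' U = lamIoc r t) (hVim : Prod.fst '' V = lamIoc r t) :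
    ∀ β (b : Lambda), b.dom = β → b ∈ lamIoc r t →
      ∃ (k : ℕ) (A : Fin k → Option Lambda) (B : Fin k → Lambda) (I J : Fin k → ℤˣ),
        (∀ m, precLt (A m) (B m)) ∧
        (∀ m, Wset (A m) (B m) (I m) ⊆ U) ∧
        (∀ m, Wset (A m) (B m) (J m) ⊆ V) ∧
        (∀ x, x ∈ lamIoc r b → ∃ m, x ∈ lamIoc (A m) (B m)) ∧
        (∀ m, lamIoc (A m) (B m) ⊆ lamIoc r b) ∧
        (∀ m m', m ≠ m' → ∀ x, x ∈ lamIoc (A m) (B m) → x ∉ lamIoc (A m') (B m')) := by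
  intro β
  induction β using Ordinal.induction with
  | h β IH =>
  rintro b rfl hb
  -- the points of U, V over b
  have hbU : ∃ jU, (b, jU) ∈ U := by
    have hm : b ∈ Prod.fst '' U := hUim ▸ hb
    obtain ⟨p, hp, hp1⟩ := hm
    exact ⟨p.2, by rwa [show (b, p.2) = p from Prod.ext hp1.symm rfl]⟩
  have hbV : ∃ jV, (b, jV) ∈ V := by
    have hm : b ∈ Prod.fst '' V := hVim ▸ hb
    obtain ⟨p, hp, hp1⟩ := hm
    exact ⟨p.2, by rwa [show (b, p.2) = p from Prod.ext hp1.symm rfl]⟩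
  obtain ⟨jU, hjU⟩ := hbU
  obtain ⟨jV, hjV⟩ := hbV
  obtain ⟨θ, hθlt, hθprop⟩ :
      ∃ θ : Option Ordinal.{0}, (∀ ϑ ∈ θ, ϑ < b.dom) ∧
        ∀ x, Lambda.le x b → (∀ ϑ ∈ θ, ϑ < x.dom) →
          ((x, (-1) ^ ell x b * jU) ∈ U ∧ (x, (-1) ^ ell x b * jV) ∈ V) := by
    obtain ⟨θU, hθUlt, hθU⟩ := open_nbhd hUo (b, jU) hjU
    obtain ⟨θV, hθVlt, hθV⟩ := open_nbhd hVo (b, jV) hjV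
    refine ⟨omax θU θV, omax_forall_lt.2 ⟨hθUlt, hθVlt⟩, ?_⟩
    intro x hx hq
    obtain ⟨hq1, hq2⟩ := omax_forall_lt.1 hq
    exact ⟨hθU x hx hq1, hθV x hx hq2⟩
  -- helper for the single-piece cases
  have hsingle : (∀ x, x ∈ lamIoc r b → (∀ ϑ ∈ θ, ϑ < x.dom)) →
      ∃ (k : ℕ) (A : Fin k → Option Lambda) (B : Fin k → Lambda) (I J : Fin k → ℤˣ),
        (∀ m, precLt (A m) (B m)) ∧
        (∀ m, Wset (A m) (B m) (I m) ⊆ U) ∧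
        (∀ m, Wset (A m) (B m) (J m) ⊆ V) ∧
        (∀ x, x ∈ lamIoc r b → ∃ m, x ∈ lamIoc (A m) (B m)) ∧
        (∀ m, lamIoc (A m) (B m) ⊆ lamIoc r b) ∧
        (∀ m m', m ≠ m' → ∀ x, x ∈ lamIoc (A m) (B m) → x ∉ lamIoc (A m') (B m')) := by
    intro hqual
    refine ⟨1, fun _ => r, fun _ => b, fun _ => jU, fun _ => jV, fun _ => hb.1,
      ?_, ?_, fun x hx => ⟨0, hx⟩, fun _ => fun x hx => hx, ?_⟩
    · intro m q hq
      obtain ⟨hq1, hq2⟩ := hq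
      have h1 := (hθprop q.1 hq1.2 (hqual q.1 hq1)).1
      rwa [show q = (q.1, (-1) ^ ell q.1 b * jU) from Prod.ext rfl hq2]
    · intro m q hq
      obtain ⟨hq1, hq2⟩ := hq
      have h1 := (hθprop q.1 hq1.2 (hqual q.1 hq1)).2
      rwa [show q = (q.1, (-1) ^ ell q.1 b * jV) from Prod.ext rfl hq2]
    · intro m m' hne
      exact absurd (Subsingleton.elim m m') hne
  cases θ with
  | none => exact hsingle (fun x _ ϑ hϑ => by simp at hϑ)
  | some ϑ =>
    have hϑb : ϑ < b.dom := hθlt ϑ rfl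
    by_cases hfin : ∀ x, x ∈ lamIoc r b → ϑ < x.dom
    · refine hsingle (fun x hx ϑ' hϑ' => ?_)
      rw [Option.mem_some_iff] at hϑ'
      rw [← hϑ']
      exact hfin x hx
    · -- recurse below the cut a' = res b ϑ
      push_neg at hfin
      obtain ⟨x₀, hx₀, hx₀d⟩ := hfin
      set a' : Lambda := res b ϑ hϑb.le with ha'def
      have ha'b : a'.lt b := lt_of_both_le (res_le b ϑ hϑb.le) (Lambda.le_refl b) hϑb
      have ha't : a' ∈ lamIoc r t := by
        constructor
        · cases r with
          | none => trivial
          | some r₀ =>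
            have h1 : r₀.lt x₀ := hx₀.1
            have h2 : r₀.dom < ϑ := lt_of_lt_of_le (Lambda.lt_dom h1) hx₀d
            exact lt_of_both_le (hb.1 : r₀.lt b).1 (res_le b ϑ hϑb.le) h2
        · exact Lambda.le_trans (res_le b ϑ hϑb.le) hb.2
      obtain ⟨k, A, B, I, J, p1, p2, p3, p4, p5, p6⟩ := IH ϑ hϑb a' rfl ha't
      refine ⟨k + 1, Fin.cons (some a') A, Fin.cons b B, Fin.cons jU I, Fin.cons jV J,
        ?_, ?_, ?_, ?_, ?_, ?_⟩
      · intro m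
        refine Fin.cases ?_ ?_ m
        · simp only [Fin.cons_zero]; exact ha'b
        · intro n; simpa using p1 n
      · intro m
        refine Fin.cases ?_ ?_ m
        · simp only [Fin.cons_zero]
          intro q hq
          obtain ⟨hq1, hq2⟩ := hq
          have hqd : ϑ < q.1.dom := Lambda.lt_dom (hq1.1 : a'.lt q.1)
          have h1 := (hθprop q.1 hq1.2 (fun ϑ' hϑ' => by
            rw [Option.mem_some_iff] at hϑ'; rw [← hϑ']; exact hqd)).1
          rwa [show q = (q.1, (-1) ^ ell q.1 b * jU) from Prod.ext rfl hq2]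
        · intro n; simpa using p2 n
      · intro m
        refine Fin.cases ?_ ?_ m
        · simp only [Fin.cons_zero]
          intro q hq
          obtain ⟨hq1, hq2⟩ := hq
          have hqd : ϑ < q.1.dom := Lambda.lt_dom (hq1.1 : a'.lt q.1)
          have h1 := (hθprop q.1 hq1.2 (fun ϑ' hϑ' => by
            rw [Option.mem_some_iff] at hϑ'; rw [← hϑ']; exact hqd)).2
          rwa [show q = (q.1, (-1) ^ ell q.1 b * jV) from Prod.ext rfl hq2]
        · intro n; simpa using p3 n
      · intro x hx
        rcases lt_or_ge ϑ x.dom with hxd | hxd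
        · refine ⟨0, ?_⟩
          simp only [Fin.cons_zero]
          exact ⟨lt_of_both_le (res_le b ϑ hϑb.le) hx.2 hxd, hx.2⟩
        · obtain ⟨m, hm⟩ := p4 x ⟨hx.1, le_of_both_le hx.2 (res_le b ϑ hϑb.le) hxd⟩
          exact ⟨m.succ, by simpa using hm⟩
      · intro m
        refine Fin.cases ?_ ?_ m
        · simp only [Fin.cons_zero]
          intro x hx
          refine ⟨?_, hx.2⟩
          cases r with
          | none => trivial
          | some r₀ => exact Lambda.lt_trans (ha't.1 : r₀.lt a') (hx.1 : a'.lt x)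
        · intro n
          simp only [Fin.cons_succ]
          intro x hx
          have h1 := p5 n hx
          exact ⟨h1.1, Lambda.le_trans h1.2 (res_le b ϑ hϑb.le)⟩
      · intro m m' hne x hx hx'
        rcases Fin.eq_zero_or_eq_succ m with rfl | ⟨n, rfl⟩ <;>
          rcases Fin.eq_zero_or_eq_succ m' with rfl | ⟨n', rfl⟩
        · exact hne rfl
        · simp only [Fin.cons_zero] at hx
          simp only [Fin.cons_succ] at hx'
          have h1 : ϑ < x.dom := Lambda.lt_dom (hx.1 : a'.lt x)
          have h2 : x.dom ≤ ϑ := (p5 n' hx').2.1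
          exact absurd h2 (not_le.2 h1)
        · simp only [Fin.cons_succ] at hx
          simp only [Fin.cons_zero] at hx'
          have h1 : ϑ < x.dom := Lambda.lt_dom (hx'.1 : a'.lt x)
          have h2 : x.dom ≤ ϑ := (p5 n hx).2.1
          exact absurd h2 (not_le.2 h1)
        · simp only [Fin.cons_succ] at hx hx'
          exact p6 n n' (fun h => hne (congrArg Fin.succ h)) x hx hx'


end LambdaAux

open LambdaAux in
/-- If `U, V ⊆ D` are open, the projection `π` is injective on each of them, and
`π(U) = π(V) = (r,t]`, then `U` and `V` decompose into basic open sets `W₁,…,W_k` and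
`W′₁,…,W′_k` such that each `W_i` either equals `W′_i` or is disjoint from it, and the
`W_i` (resp. `W′_i`) are pairwise disjoint. -/
theorem refinement_lemma (U V : Set Dup) (r : Option Lambda) (t : Lambda)
    (hU : IsOpen U) (hV : IsOpen V)
    (hUinj : Set.InjOn Prod.fst U) (hVinj : Set.InjOn Prod.fst V)
    (hUim : Prod.fst '' U = lamIoc r t) (hVim : Prod.fst '' V = lamIoc r t) :
    ∃ (k : ℕ) (Ws Ws' : Fin k → Set Dup),
      (∀ i, Ws i ∈ WBasis) ∧ (∀ i, Ws' i ∈ WBasis) ∧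
      U = ⋃ i, Ws i ∧ V = ⋃ i, Ws' i ∧
      (∀ i, Ws i = Ws' i ∨ Ws i ∩ Ws' i = ∅) ∧
      (∀ i j, i ≠ j → Ws i ∩ Ws j = ∅ ∧ Ws' i ∩ Ws' j = ∅) := by
  by_cases hne2 : (lamIoc r t).Nonempty
  · obtain ⟨s₀, hs₀⟩ := hne2
    have hprec : precLt r t := by
      cases r with
      | none => trivial
      | some r₀ =>
        have h1 : r₀.lt s₀ := hs₀.1
        refine ⟨Lambda.le_trans h1.1 hs₀.2, fun he => ?_⟩
        have hd : r₀.dom < t.dom := lt_of_lt_of_le (Lambda.lt_dom h1) hs₀.2.1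
        rw [he] at hd
        exact lt_irrefl _ hd
    have hbt : t ∈ lamIoc r t := ⟨hprec, Lambda.le_refl t⟩
    obtain ⟨k, A, B, I, J, p1, p2, p3, p4, p5, p6⟩ :=
      dec U V r t hU hV hUim hVim t.dom t rfl hbt
    refine ⟨k, fun m => Wset (A m) (B m) (I m), fun m => Wset (A m) (B m) (J m),
      fun m => ⟨A m, B m, I m, p1 m, rfl⟩, fun m => ⟨A m, B m, J m, p1 m, rfl⟩,
      ?_, ?_, ?_, ?_⟩
    · apply Set.Subset.antisymm
      · intro p hp
        have hp1 : p.1 ∈ lamIoc r t := hUim ▸ ⟨p, hp, rfl⟩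
        obtain ⟨m, hm⟩ := p4 p.1 hp1
        have hw : (p.1, (-1) ^ ell p.1 (B m) * I m) ∈ Wset (A m) (B m) (I m) := ⟨hm, rfl⟩
        have hpe : p = (p.1, (-1) ^ ell p.1 (B m) * I m) := hUinj hp (p2 m hw) rfl
        exact Set.mem_iUnion.2 ⟨m, hpe ▸ hw⟩
      · exact Set.iUnion_subset p2
    · apply Set.Subset.antisymm
      · intro p hp
        have hp1 : p.1 ∈ lamIoc r t := hVim ▸ ⟨p, hp, rfl⟩
        obtain ⟨m, hm⟩ := p4 p.1 hp1
        have hw : (p.1, (-1) ^ ell p.1 (B m) * J m) ∈ Wset (A m) (B m) (J m) := ⟨hm, rfl⟩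
        have hpe : p = (p.1, (-1) ^ ell p.1 (B m) * J m) := hVinj hp (p3 m hw) rfl
        exact Set.mem_iUnion.2 ⟨m, hpe ▸ hw⟩
      · exact Set.iUnion_subset p3
    · intro m
      by_cases hIJ : I m = J m
      · left; show Wset (A m) (B m) (I m) = Wset (A m) (B m) (J m); rw [hIJ]
      · right
        rw [Set.eq_empty_iff_forall_notMem]
        rintro q ⟨h1, h2⟩
        exact hIJ (mul_left_cancel (h1.2.symm.trans h2.2))
    · intro m m' hmm
      constructor <;>
      · rw [Set.eq_empty_iff_forall_notMem]
        rintro q ⟨h1, h2⟩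
        exact p6 m m' hmm q.1 h1.1 h2.1
  · rw [Set.not_nonempty_iff_eq_empty] at hne2
    have hU0 : U = ∅ := Set.image_eq_empty.1 (by rw [hUim, hne2])
    have hV0 : V = ∅ := Set.image_eq_empty.1 (by rw [hVim, hne2])
    refine ⟨0, Fin.elim0, Fin.elim0, fun m => m.elim0, fun m => m.elim0, ?_, ?_,
      fun m => m.elim0, fun m => m.elim0⟩
    · rw [hU0]; exact (Set.iUnion_of_empty _).symm
    · rw [hV0]; exact (Set.iUnion_of_empty _).symm
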